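/- Let a₁, a₂, …, a_k be positive integers with gcd(a₁,…,a_k) = 1. Then the Sylvester sum satisfies s(a₁,…,a_k) = (1/(2a₁)) ∑_{i=1}^{a₁−1} m_i² − (1/2) ∑_{i=1}^{a₁−1} m_i + (a₁² − 1)/12. -/

import Mathlib

lemma gauss1 (q : ℕ) : ∑ j ∈ Finset.range q, (j : ℚ) = q * (q - 1) / 2 := by
  induction q with
  | zero => simp
  | succ n ih => rw [Finset.sum_range_succ, ih]; push_cast; ring

lemma gauss2 (q : ℕ) : ∑ j ∈ Finset.range q, (j : ℚ) ^ 2 = q * (q - 1) * (2 * q - 1) / 6 := by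
  induction q with
  | zero => simp
  | succ n ih => rw [Finset.sum_range_succ, ih]; push_cast; ring

/-- the Sylvester sum equals
`(1/(2a₁)) ∑ m_i² - (1/2) ∑ m_i + (a₁² - 1)/12`. -/
theorem sylvester_sum_eq
    (k : ℕ) (hk : 0 < k) (a : Fin k → ℕ) (ha : ∀ i, 0 < a i)
    (hgcd : Finset.univ.gcd a = 1)
    (m : ℕ → ℕ)
    (hm : ∀ i, 1 ≤ i → i < a ⟨0, hk⟩ →
      0 < m i ∧ (∃ x : Fin k → ℕ, m i = ∑ j, x j * a j) ∧ m i % a ⟨0, hk⟩ = i ∧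
        ∀ n : ℕ, 0 < n → (∃ x : Fin k → ℕ, n = ∑ j, x j * a j) → n % a ⟨0, hk⟩ = i →
          m i ≤ n) :
    ∑ᶠ n ∈ {n : ℕ | 0 < n ∧ ¬∃ x : Fin k → ℕ, n = ∑ j, x j * a j}, (n : ℚ) =
      (1 / (2 * (a ⟨0, hk⟩ : ℚ))) * ∑ i ∈ Finset.Ico 1 (a ⟨0, hk⟩), (m i : ℚ) ^ 2
        - (1 / 2) * ∑ i ∈ Finset.Ico 1 (a ⟨0, hk⟩), (m i : ℚ)
        + ((a ⟨0, hk⟩ : ℚ) ^ 2 - 1) / 12 := by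
  set i0 : Fin k := ⟨0, hk⟩ with hi0
  set A := a i0 with hAdef
  have hApos : 0 < A := ha i0
  have hAQ : (A : ℚ) ≠ 0 := Nat.cast_ne_zero.mpr hApos.ne'
  -- representability of multiples of A
  have rep_mul : ∀ t : ℕ, ∃ x : Fin k → ℕ, t * A = ∑ j, x j * a j := by
    intro t
    refine ⟨fun j => if j = i0 then t else 0, ?_⟩
    rw [Finset.sum_eq_single i0]
    · simp [hAdef]
    · intro b _ hb; simp [hb]
    · intro h; exact absurd (Finset.mem_univ i0) h
  have rep_add : ∀ n t : ℕ, (∃ x : Fin k → ℕ, n = ∑ j, x j * a j) →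
      ∃ x : Fin k → ℕ, n + t * A = ∑ j, x j * a j := by
    rintro n t ⟨x, hx⟩
    obtain ⟨y, hy⟩ := rep_mul t
    exact ⟨fun j => x j + y j, by
      simp only [add_mul, Finset.sum_add_distrib, ← hx, ← hy]⟩
  set Tset : Finset ℕ :=
    ((Finset.Ico 1 A).sigma fun i => Finset.range (m i / A)).image
      (fun p => p.1 + A * p.2) with hTdef
  have hSet : {n : ℕ | 0 < n ∧ ¬∃ x : Fin k → ℕ, n = ∑ j, x j * a j} = ↑Tset := by
    ext n
    simp only [Set.mem_setOf_eq, hTdef, Finset.coe_image, Set.mem_image, Finset.mem_coe,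
      Finset.mem_sigma, Finset.mem_Ico, Finset.mem_range]
    constructor
    · rintro ⟨hn, hnr⟩
      have hiA : n % A < A := Nat.mod_lt _ hApos
      have hipos : 0 < n % A := by
        rcases Nat.eq_zero_or_pos (n % A) with h0 | h
        · exfalso; apply hnr
          obtain ⟨x, hx⟩ := rep_mul (n / A)
          exact ⟨x, by rw [← hx, Nat.div_mul_cancel (Nat.dvd_of_mod_eq_zero h0)]⟩
        · exact h
      obtain ⟨hmpos, hmrep, hmmod, hmmin⟩ := hm (n % A) hipos hiA
      have hlt : n < m (n % A) := by
        by_contra hge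
        push_neg at hge
        have hmod : m (n % A) % A = n % A := hmmod
        have hdvd : A ∣ n - m (n % A) := (Nat.modEq_iff_dvd' hge).mp hmod
        obtain ⟨t, ht⟩ := hdvd
        apply hnr
        have h2 := rep_add (m (n % A)) t hmrep
        have h3 : m (n % A) + t * A = n := by
          rw [mul_comm t A, ← ht, Nat.add_sub_cancel' hge]
        rwa [h3] at h2
      refine ⟨⟨n % A, n / A⟩, ⟨⟨hipos, hiA⟩, ?_⟩, by
        simpa using Nat.mod_add_div n A⟩
      · -- n / A < m (n % A) / A
        have hmeq : m (n % A) = A * (m (n % A) / A) + n % A := by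
          conv_lhs => rw [← Nat.div_add_mod (m (n % A)) A, hmmod]
        have hneq : n = A * (n / A) + n % A := (Nat.div_add_mod n A).symm
        have : A * (n / A) < A * (m (n % A) / A) := by omega
        exact Nat.lt_of_mul_lt_mul_left this
    · rintro ⟨⟨i, j⟩, ⟨⟨hi1, hiA⟩, hj⟩, rfl⟩
      dsimp only at hi1 hiA hj ⊢
      obtain ⟨hmpos, hmrep, hmmod, hmmin⟩ := hm i hi1 hiA
      have hmod : (i + A * j) % A = i := by
        rw [Nat.add_mul_mod_self_left, Nat.mod_eq_of_lt hiA]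
      have hmeq : m i = A * (m i / A) + i := by
        conv_lhs => rw [← Nat.div_add_mod (m i) A, hmmod]
      have hlt : i + A * j < m i := by
        have h1 : A * j + A ≤ A * (m i / A) := by
          have := Nat.mul_le_mul_left A hj
          calc A * j + A = A * (j + 1) := by ring
            _ ≤ A * (m i / A) := Nat.mul_le_mul_left A hj
        omega
      refine ⟨by omega, fun hrep => ?_⟩
      exact absurd (hmmin _ (by omega) hrep hmod) (by omega)
  rw [hSet, finsum_mem_coe_finset, hTdef]
  rw [Finset.sum_image]
  · rw [Finset.sum_sigma]
    have key : ∀ i ∈ Finset.Ico 1 A,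
        (∑ j ∈ Finset.range (m i / A), ((i + A * j : ℕ) : ℚ)) =
          (1 / (2 * (A : ℚ))) * (m i : ℚ) ^ 2 - (1 / 2) * (m i : ℚ)
            - ((1 / (2 * (A : ℚ))) * (i : ℚ) ^ 2 - (1 / 2) * (i : ℚ)) := by
      intro i hi
      rw [Finset.mem_Ico] at hi
      obtain ⟨hmpos, hmrep, hmmod, hmmin⟩ := hm i hi.1 hi.2
      have hmeq : m i = A * (m i / A) + i := by
        conv_lhs => rw [← Nat.div_add_mod (m i) A, hmmod]
      set q := m i / A with hq
      have hmQ : (m i : ℚ) = A * q + i := by exact_mod_cast congrArg Nat.cast hmeq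
      push_cast
      rw [Finset.sum_add_distrib, Finset.sum_const, ← Finset.mul_sum, gauss1, hmQ]
      simp only [Finset.card_range, nsmul_eq_mul]
      field_simp
      ring
    rw [Finset.sum_congr rfl key, Finset.sum_sub_distrib, Finset.sum_sub_distrib,
      Finset.sum_sub_distrib, ← Finset.mul_sum, ← Finset.mul_sum, ← Finset.mul_sum,
      ← Finset.mul_sum]
    have hI1 : ∑ i ∈ Finset.Ico 1 A, (i : ℚ) = A * (A - 1) / 2 := by
      have h0 : ∑ i ∈ Finset.range A, (i : ℚ) = ((0 : ℕ) : ℚ) + ∑ i ∈ Finset.Ico 1 A, (i : ℚ) := by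
        rw [Finset.range_eq_Ico, Finset.sum_eq_sum_Ico_succ_bot hApos]
      rw [gauss1] at h0
      push_cast at h0 ⊢
      linarith
    have hI2 : ∑ i ∈ Finset.Ico 1 A, (i : ℚ) ^ 2 = A * (A - 1) * (2 * A - 1) / 6 := by
      have h0 : ∑ i ∈ Finset.range A, (i : ℚ) ^ 2
          = ((0 : ℕ) : ℚ) ^ 2 + ∑ i ∈ Finset.Ico 1 A, (i : ℚ) ^ 2 := by
        rw [Finset.range_eq_Ico, Finset.sum_eq_sum_Ico_succ_bot hApos]
      rw [gauss2] at h0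
      push_cast at h0 ⊢
      linarith
    rw [hI1, hI2]
    field_simp
    ring
  · rintro ⟨i, j⟩ hp ⟨i', j'⟩ hp' heq
    simp only [Finset.mem_coe, Finset.mem_sigma, Finset.mem_Ico, Finset.mem_range] at hp hp'
    dsimp only at heq
    have hii : i = i' := by
      have h1 := congrArg (· % A) heq
      simpa [Nat.add_mul_mod_self_left, Nat.mod_eq_of_lt hp.1.2,
        Nat.mod_eq_of_lt hp'.1.2] using h1
    subst hii
    have hjj : j = j' := by
      have : A * j = A * j' := by omega
      exact Nat.eq_of_mul_eq_mul_left hApos this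
    subst hjj
    rfl
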